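/- For every integer g ≥ 2 there exists a surjective group homomorphism from the group Γ = ⟨γ₁,…,γ₅ ∣ γⱼ² = 1 (j = 1,…,5), γ₁γ₂γ₃γ₄γ₅ = 1⟩ onto the dihedral group of order 4(g-1) such that the image of each generator γⱼ has order exactly 2. -/

import Mathlib

/-- Relations of the Fuchsian group of signature (2,2,2,2,2):
the squares of the five generators and their product. -/
def rels22222 : Set (FreeGroup (Fin 5)) :=
  {w | ∃ j : Fin 5, w = FreeGroup.of j ^ 2} ∪
  {FreeGroup.of 0 * FreeGroup.of 1 * FreeGroup.of 2 * FreeGroup.of 3 * FreeGroup.of 4}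

open DihedralGroup in
/-- For every `g ≥ 2` there is a surjective homomorphism from the group
`⟨γ₁,…,γ₅ ∣ γⱼ² = 1, γ₁⋯γ₅ = 1⟩` onto the dihedral group of order `4(g-1)`
mapping each generator to an element of order exactly 2. -/
theorem stmt1 (g : ℕ) (hg : 2 ≤ g) :
    ∃ f : PresentedGroup rels22222 →* DihedralGroup (2 * (g - 1)),
      Function.Surjective f ∧ ∀ j : Fin 5, orderOf (f (PresentedGroup.of j)) = 2 := by
  set n := 2 * (g - 1) with hn
  haveI : NeZero n := ⟨by omega⟩
  set F : Fin 5 → DihedralGroup n :=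
    ![sr 0, sr 1, sr 0, sr ((g - 2 : ℕ) : ZMod n), r ((g - 1 : ℕ) : ZMod n)] with hF
  have key : ((g - 1 : ℕ) : ZMod n) + ((g - 1 : ℕ) : ZMod n) = 0 := by
    rw [← Nat.cast_add]
    have h : (g - 1) + (g - 1) = n := by omega
    rw [h, ZMod.natCast_self]
  have key2 : ((g - 2 : ℕ) : ZMod n) + 1 + ((g - 1 : ℕ) : ZMod n) = 0 := by
    have h2 : ((g - 2 : ℕ) : ZMod n) + 1 = ((g - 1 : ℕ) : ZMod n) := by
      rw [← Nat.cast_one, ← Nat.cast_add]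
      congr 1; omega
    rw [h2, key]
  have hrel : ∀ w ∈ rels22222, FreeGroup.lift F w = 1 := by
    intro w hw
    rcases hw with ⟨j, rfl⟩ | rfl
    · fin_cases j <;>
        simp [F, pow_two, sr_mul_sr, r_mul_r, key, one_def, -r_zero]
    · simp only [map_mul, FreeGroup.lift_apply_of]
      show F 0 * F 1 * F 2 * F 3 * F 4 = 1
      simp [F, sr_mul_sr, r_mul_sr, sr_mul_sr, r_mul_r, key2, one_def, -r_zero]
  refine ⟨PresentedGroup.toGroup hrel, ?_, ?_⟩
  · have hof : ∀ j : Fin 5,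
        PresentedGroup.toGroup hrel (PresentedGroup.of j) = F j :=
      fun j => PresentedGroup.toGroup.of hrel
    have hr : ∀ i : ZMod n, r i ∈ Set.range (PresentedGroup.toGroup hrel) := by
      intro i
      refine ⟨(PresentedGroup.of 0 * PresentedGroup.of 1) ^ i.val, ?_⟩
      rw [map_pow, map_mul, hof, hof]
      show ((sr 0 * sr 1 : DihedralGroup n)) ^ i.val = r i
      rw [sr_mul_sr, sub_zero, r_one_pow, ZMod.natCast_val, ZMod.cast_id]
    intro x
    cases x with
    | r i => exact hr i
    | sr i =>
      obtain ⟨y, hy⟩ := hr i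
      refine ⟨PresentedGroup.of 0 * y, ?_⟩
      rw [map_mul, hy, hof]
      show (sr 0 : DihedralGroup n) * r i = sr i
      rw [sr_mul_r, zero_add]
  · intro j
    rw [PresentedGroup.toGroup.of]
    fin_cases j
    · exact orderOf_sr 0
    · exact orderOf_sr 1
    · exact orderOf_sr 0
    · exact orderOf_sr _
    · show orderOf (r ((g - 1 : ℕ) : ZMod n)) = 2
      have h1 : (r ((g - 1 : ℕ) : ZMod n) : DihedralGroup n) ^ 2 = 1 := by
        rw [pow_two, r_mul_r, key, one_def]
      have h2 : (r ((g - 1 : ℕ) : ZMod n) : DihedralGroup n) ≠ 1 := by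
        rw [one_def]
        intro h
        have := r.inj h
        rw [ZMod.natCast_eq_zero_iff] at this
        have := Nat.le_of_dvd (by omega) this
        omega
      exact orderOf_eq_prime h1 h2
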